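/- Let s, w be complex numbers with Re(s) > 2 and Re(w) > 2. Then Σ_{q ≥ 1} Σ_{m ≥ 1, m odd} τ(χ^{(4m)}, q)·q^{−s}·m^{−w} = −2^{−s}·(C_1(s,w; ψ_2, ψ_1) + C_1(s,w; ψ_{−2}, ψ_1)) + 4^{−s}·(C_1(s,w; ψ_1, ψ_0) + C_1(s,w; ψ_{−1}, ψ_0)) + C_1(s,w; ψ_1, ψ_{−1}) − C_1(s,w; ψ_{−1}, ψ_{−1}), where all series converge absolutely. -/

import Mathlib

open Complex Finset


open Complex

/-- The Gauss sum `τ(χ, q) = ∑_{j=0}^{n-1} χ(j) e(jq/n)` of a function `χ` regarded as a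
character modulo `n`, at the integer `q`, where `e(z) = exp(2πiz)`. -/
noncomputable def tauChar (n : ℕ) (χ : ℕ → ℂ) (q : ℤ) : ℂ :=
  ∑ j ∈ Finset.range n, χ j * Complex.exp (2 * Real.pi * Complex.I * j * q / n)

/-- The quadratic character `χ_n = (·/n)` given by the Jacobi symbol, for odd positive `n`. -/
noncomputable def chiJacobi (n : ℕ) : ℕ → ℂ := fun m => (jacobiSym m n : ℂ)

/-- The character `χ^{(4m)}` modulo `4m`: it vanishes on even integers and takes the value
given by the Jacobi symbol `(m/j)` at odd `j`. -/
noncomputable def chi4m (m : ℕ) : ℕ → ℂ := fun j => if Odd j then (jacobiSym m j : ℂ) else 0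

/-- The normalized Gauss sum
`G(χ_n, q) = ((1−i)/2 + (−1/n)·(1+i)/2)·τ(χ_n, q)` for odd positive `n`. -/
noncomputable def GJacobi (n : ℕ) (q : ℤ) : ℂ :=
  ((1 - Complex.I) / 2 + (jacobiSym (-1) n : ℂ) * (1 + Complex.I) / 2) * tauChar n (chiJacobi n) q

/-- For `j ∈ {±1, ±2}`, the character `ψ_j`: zero on even integers, Jacobi symbol `(j/k)` on
odd `k`. -/
noncomputable def psiJ (j : ℤ) : ℕ → ℂ := fun k => if Odd k then (jacobiSym j k : ℂ) else 0

/-- The primitive principal character `ψ_0`, the constant function `1`. -/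
noncomputable def psi0 : ℕ → ℂ := fun _ => 1

/-- The term of the double Dirichlet series `C_1(s, w; ψ, ψ')`. -/
noncomputable def C1term (s w : ℂ) (ψ ψ' : ℕ → ℂ) (lq : ℕ+ × ℕ+) : ℂ :=
  GJacobi lq.1 lq.2 * ψ lq.1 * ψ' lq.2 / (((lq.1 : ℕ) : ℂ) ^ w * ((lq.2 : ℕ) : ℂ) ^ s)

/-- The double Dirichlet series `C_1(s, w; ψ, ψ') = ∑_{l,q ≥ 1} G(χ_l, q) ψ(l) ψ'(q) l^{−w} q^{−s}`. -/
noncomputable def C1 (s w : ℂ) (ψ ψ' : ℕ → ℂ) : ℂ := ∑' lq : ℕ+ × ℕ+, C1term s w ψ ψ' lq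



lemma jacobi_norm_le (a : ℤ) (b : ℕ) : ‖((jacobiSym a b : ℤ) : ℂ)‖ ≤ 1 := by
  rcases jacobiSym.trichotomy a b with h | h | h <;> simp [h]

lemma norm_e (j : ℕ) (q : ℤ) (n : ℕ) : ‖Complex.exp (2 * Real.pi * Complex.I * j * q / n)‖ = 1 := by
  rw [show (2 * (Real.pi : ℂ) * Complex.I * j * q / n : ℂ)
      = ((2 * Real.pi * j * q / n : ℝ) : ℂ) * Complex.I by push_cast; ring]
  exact Complex.norm_exp_ofReal_mul_I _

lemma tau_norm_le (n : ℕ) (χ : ℕ → ℂ) (h : ∀ j, ‖χ j‖ ≤ 1) (q : ℤ) : ‖tauChar n χ q‖ ≤ n := by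
  refine (norm_sum_le _ _).trans ?_
  calc ∑ j ∈ range n, ‖χ j * Complex.exp (2 * Real.pi * Complex.I * j * q / n)‖
      ≤ ∑ j ∈ range n, 1 := by
        refine Finset.sum_le_sum fun j _ => ?_
        rw [norm_mul, norm_e]
        simpa using h j
    _ = n := by simp

lemma chiJacobi_norm_le (n j : ℕ) : ‖chiJacobi n j‖ ≤ 1 := jacobi_norm_le _ _

lemma chi4m_norm_le (m j : ℕ) : ‖chi4m m j‖ ≤ 1 := by
  unfold chi4m; split
  · exact jacobi_norm_le _ _
  · simp

lemma psiJ_norm_le (a : ℤ) (j : ℕ) : ‖psiJ a j‖ ≤ 1 := by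
  unfold psiJ; split
  · exact jacobi_norm_le _ _
  · simp

lemma psi0_norm_le (j : ℕ) : ‖psi0 j‖ ≤ 1 := by simp [psi0]

lemma GJacobi_norm_le (n : ℕ) (q : ℤ) : ‖GJacobi n q‖ ≤ 2 * n := by
  unfold GJacobi
  rw [norm_mul]
  have h1 : ‖((1 : ℂ) - Complex.I) / 2 + (jacobiSym (-1) n : ℂ) * (1 + Complex.I) / 2‖ ≤ 2 := by
    refine (norm_add_le _ _).trans ?_
    have e1 : ‖((1:ℂ) - Complex.I) / 2‖ ≤ 1 := by
      rw [norm_div]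
      rw [show ‖(2:ℂ)‖ = 2 by simp]
      nlinarith [norm_sub_le (1:ℂ) Complex.I, Complex.norm_I, norm_one (α := ℂ)]
    have e2 : ‖(jacobiSym (-1) n : ℂ) * (1 + Complex.I) / 2‖ ≤ 1 := by
      rw [norm_div, norm_mul, show ‖(2:ℂ)‖ = 2 by simp]
      nlinarith [norm_add_le (1:ℂ) Complex.I, Complex.norm_I, norm_one (α := ℂ),
        jacobi_norm_le (-1) n, norm_nonneg ((1:ℂ) + Complex.I), norm_nonneg ((jacobiSym (-1) n : ℤ) : ℂ)]
    linarith
  have h2 : ‖tauChar n (chiJacobi n) q‖ ≤ n := tau_norm_le _ _ (chiJacobi_norm_le n) q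
  calc ‖((1:ℂ) - Complex.I) / 2 + (jacobiSym (-1) n : ℂ) * (1 + Complex.I) / 2‖ * ‖tauChar n (chiJacobi n) q‖
      ≤ 2 * n := by
        have := norm_nonneg (tauChar n (chiJacobi n) q)
        nlinarith

lemma summable_pnat_rpow {r : ℝ} (hr : 1 < r) : Summable (fun n : ℕ+ => (n : ℝ) ^ (-r)) := by
  have h : Summable (fun n : ℕ => (n : ℝ) ^ (-r)) := Real.summable_nat_rpow.mpr (by linarith)
  have := h.comp_injective (i := (fun n : ℕ+ => (n : ℕ))) (fun a b hab => PNat.coe_injective hab)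
  exact this

lemma summable_prod_rpow {σ τ : ℝ} (hσ : 1 < σ) (hτ : 1 < τ) :
    Summable (fun p : ℕ+ × ℕ+ => (p.1 : ℝ) ^ (-σ) * (p.2 : ℝ) ^ (-τ)) :=
  (summable_pnat_rpow hσ).mul_of_nonneg (summable_pnat_rpow hτ)
    (fun n => Real.rpow_nonneg (by positivity) _) (fun n => Real.rpow_nonneg (by positivity) _)

lemma norm_pnat_cpow (k : ℕ+) (z : ℂ) : ‖(((k : ℕ) : ℂ)) ^ z‖ = (k : ℝ) ^ z.re := by
  have h : ((k : ℕ) : ℂ) = (((k : ℕ) : ℝ) : ℂ) := by push_cast; ring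
  rw [h]
  exact Complex.norm_cpow_eq_rpow_re_of_pos (by exact_mod_cast k.pos) z

lemma summable_of_bound {f : ℕ+ × ℕ+ → ℂ} {C σ τ : ℝ} (hσ : 1 < σ) (hτ : 1 < τ)
    (h : ∀ p, ‖f p‖ ≤ C * ((p.1 : ℝ) ^ (-σ) * (p.2 : ℝ) ^ (-τ))) :
    Summable (fun p => ‖f p‖) := by
  refine Summable.of_nonneg_of_le (fun p => norm_nonneg _) h ?_
  exact (summable_prod_rpow hσ hτ).mul_left C

lemma C1term_norm_le (s w : ℂ) (ψ ψ' : ℕ → ℂ) (hψ : ∀ j, ‖ψ j‖ ≤ 1) (hψ' : ∀ j, ‖ψ' j‖ ≤ 1)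
    (p : ℕ+ × ℕ+) :
    ‖C1term s w ψ ψ' p‖ ≤ 2 * ((p.1 : ℝ) ^ (-(w.re - 1)) * (p.2 : ℝ) ^ (-s.re)) := by
  obtain ⟨l, q⟩ := p
  have hl : (0:ℝ) < (l:ℝ) := by exact_mod_cast l.pos
  have hq : (0:ℝ) < (q:ℝ) := by exact_mod_cast q.pos
  have hnum : ‖GJacobi l q * ψ l * ψ' q‖ ≤ 2 * l := by
    rw [norm_mul, norm_mul]
    calc ‖GJacobi (l:ℕ) ((q:ℕ):ℤ)‖ * ‖ψ l‖ * ‖ψ' q‖ ≤ (2 * l) * 1 * 1 := by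
          gcongr
          · exact GJacobi_norm_le l q
          · exact hψ l
          · exact hψ' q
      _ = 2 * l := by ring
  have hden : ‖(((l:ℕ):ℂ)) ^ w * (((q:ℕ):ℂ)) ^ s‖ = (l:ℝ) ^ w.re * (q:ℝ) ^ s.re := by
    rw [norm_mul, norm_pnat_cpow, norm_pnat_cpow]
  rw [C1term, norm_div, hden]
  have hdpos : (0:ℝ) < (l:ℝ) ^ w.re * (q:ℝ) ^ s.re := by positivity
  calc ‖GJacobi (l:ℕ) ((q:ℕ):ℤ) * ψ l * ψ' q‖ / ((l:ℝ) ^ w.re * (q:ℝ) ^ s.re)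
      ≤ (2 * l) / ((l:ℝ) ^ w.re * (q:ℝ) ^ s.re) := by gcongr
    _ = 2 * ((l : ℝ) ^ (-(w.re - 1)) * (q : ℝ) ^ (-s.re)) := by
        rw [show -(w.re - 1) = 1 + -w.re by ring, Real.rpow_add hl, Real.rpow_one,
          Real.rpow_neg hl.le, Real.rpow_neg hq.le]
        field_simp

lemma coprime_four {m : ℕ} (hm : Odd m) : Nat.Coprime 4 m := by
  have h2 : Nat.Coprime 2 m := Nat.coprime_two_left.mpr hm
  have : (4 : ℕ) = 2 ^ 2 := by norm_num
  rw [this]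
  exact Nat.Coprime.pow_left _ h2

lemma sum_range_four_mul {m : ℕ} (hm : Odd m) (f : ℕ → ℂ)
    (hf : ∀ j : ℕ, f (j % (4 * m)) = f j) :
    ∑ j ∈ Finset.range (4 * m), f j = ∑ u ∈ Finset.range 4, ∑ v ∈ Finset.range m, f (m * u + 4 * v) := by
  have hm0 : 0 < m := hm.pos
  rw [← Finset.sum_product']
  symm
  have hinj : ∀ p₁ ∈ Finset.range 4 ×ˢ Finset.range m, ∀ p₂ ∈ Finset.range 4 ×ˢ Finset.range m,
      (m * p₁.1 + 4 * p₁.2) % (4 * m) = (m * p₂.1 + 4 * p₂.2) % (4 * m) → p₁ = p₂ := by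
    intro p₁ hp₁ p₂ hp₂ h
    simp only [Finset.mem_product, Finset.mem_range] at hp₁ hp₂
    have hmod : m * p₁.1 + 4 * p₁.2 ≡ m * p₂.1 + 4 * p₂.2 [MOD 4 * m] := h
    have h4 : m * p₁.1 + 4 * p₁.2 ≡ m * p₂.1 + 4 * p₂.2 [MOD 4] := hmod.of_mul_right m
    have hmm : m * p₁.1 + 4 * p₁.2 ≡ m * p₂.1 + 4 * p₂.2 [MOD m] := hmod.of_mul_left 4
    have hu : p₁.1 = p₂.1 := by
      have h4' : m * p₁.1 ≡ m * p₂.1 [MOD 4] := by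
        unfold Nat.ModEq at h4 ⊢; omega
      have hc : Nat.gcd 4 m = 1 := coprime_four hm
      have := Nat.ModEq.cancel_left_of_coprime (c := m) hc h4'
      unfold Nat.ModEq at this; omega
    have hv : p₁.2 = p₂.2 := by
      have hm' : 4 * p₁.2 ≡ 4 * p₂.2 [MOD m] := by
        have e1 : m * p₁.1 ≡ 0 [MOD m] := (Nat.modEq_zero_iff_dvd).mpr ⟨p₁.1, rfl⟩
        have e2 : m * p₂.1 ≡ 0 [MOD m] := (Nat.modEq_zero_iff_dvd).mpr ⟨p₂.1, rfl⟩
        calc 4 * p₁.2 ≡ m * p₁.1 + 4 * p₁.2 [MOD m] := by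
              simpa using (e1.add_right (4 * p₁.2)).symm
          _ ≡ m * p₂.1 + 4 * p₂.2 [MOD m] := hmm
          _ ≡ 4 * p₂.2 [MOD m] := by simpa using e2.add_right (4 * p₂.2)
      have hc : Nat.gcd m 4 = 1 := Nat.Coprime.symm (coprime_four hm)
      have := Nat.ModEq.cancel_left_of_coprime (c := 4) hc hm'
      unfold Nat.ModEq at this
      have := Nat.mod_eq_of_lt hp₁.2 ▸ Nat.mod_eq_of_lt hp₂.2 ▸ this
      omega
    exact Prod.ext hu hv
  refine Finset.sum_bij (i := fun (p : ℕ × ℕ) _ => (m * p.1 + 4 * p.2) % (4 * m)) ?_ ?_ ?_ ?_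
  · intro p hp
    exact Finset.mem_range.2 (Nat.mod_lt _ (by positivity))
  · intro p₁ hp₁ p₂ hp₂ h
    exact hinj p₁ hp₁ p₂ hp₂ h
  · intro b hb
    obtain ⟨a, ha, e⟩ := Finset.surj_on_of_inj_on_of_card_le
      (fun (p : ℕ × ℕ) (_ : p ∈ Finset.range 4 ×ˢ Finset.range m) => (m * p.1 + 4 * p.2) % (4 * m))
      (fun p hp => Finset.mem_range.2 (Nat.mod_lt _ (by positivity)))
      (fun p₁ p₂ hp₁ hp₂ h => hinj p₁ hp₁ p₂ hp₂ h)
      (by simp) b hb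
    exact ⟨a, ha, e.symm⟩
  · intro p hp
    exact (hf _).symm

lemma e_mod {n : ℕ} (hn : 0 < n) (q : ℤ) (j : ℕ) :
    Complex.exp (2 * Real.pi * Complex.I * ((j % n : ℕ) : ℂ) * q / n)
      = Complex.exp (2 * Real.pi * Complex.I * (j : ℂ) * q / n) := by
  have hn' : ((n : ℂ)) ≠ 0 := by exact_mod_cast hn.ne'
  obtain ⟨d, hd⟩ : ∃ d, j = n * d + j % n := ⟨j / n, (Nat.div_add_mod j n).symm⟩
  have hj : (j : ℂ) = (n : ℂ) * (d : ℂ) + ((j % n : ℕ) : ℂ) := by exact_mod_cast congrArg (Nat.cast : ℕ → ℂ) hd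
  rw [show (2 * (Real.pi : ℂ) * Complex.I * (j : ℂ) * q / n)
      = 2 * (Real.pi : ℂ) * Complex.I * ((j % n : ℕ) : ℂ) * q / n
        + (((d : ℤ) * q : ℤ) : ℂ) * (2 * (Real.pi : ℂ) * Complex.I) by
    rw [hj]; push_cast; field_simp; ring]
  rw [Complex.exp_add, Complex.exp_int_mul_two_pi_mul_I, mul_one]

lemma sum_range_mul_shift {m : ℕ} (hm0 : 0 < m) {a : ℕ} (ha : Nat.Coprime a m) (f : ℕ → ℂ)
    (hf : ∀ j, f (j % m) = f j) :
    ∑ v ∈ Finset.range m, f v = ∑ v ∈ Finset.range m, f (a * v) := by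
  have hinj : ∀ p₁ ∈ Finset.range m, ∀ p₂ ∈ Finset.range m,
      (a * p₁) % m = (a * p₂) % m → p₁ = p₂ := by
    intro v₁ h₁ v₂ h₂ h
    simp only [Finset.mem_range] at h₁ h₂
    have : v₁ ≡ v₂ [MOD m] :=
      Nat.ModEq.cancel_left_of_coprime (c := a) (Nat.Coprime.symm ha) h
    unfold Nat.ModEq at this
    rw [Nat.mod_eq_of_lt h₁, Nat.mod_eq_of_lt h₂] at this
    exact this
  symm
  refine Finset.sum_bij (i := fun v _ => (a * v) % m) ?_ hinj ?_ ?_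
  · intro v hv; exact Finset.mem_range.2 (Nat.mod_lt _ hm0)
  · intro b hb
    obtain ⟨v, hv, e⟩ := Finset.surj_on_of_inj_on_of_card_le
      (fun (v : ℕ) (_ : v ∈ Finset.range m) => (a * v) % m)
      (fun v hv => Finset.mem_range.2 (Nat.mod_lt _ hm0))
      (fun v₁ v₂ h₁ h₂ h => hinj v₁ h₁ v₂ h₂ h) (le_refl _) b hb
    exact ⟨v, hv, e.symm⟩
  · intro v hv; exact (hf _).symm

lemma tauChar_mul_shift {m : ℕ} (hm : Odd m) {a : ℕ} (ha : Nat.Coprime a m) (q : ℤ) :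
    tauChar m (chiJacobi m) ((a : ℤ) * q) = (jacobiSym a m : ℂ) * tauChar m (chiJacobi m) q := by
  have hm0 : 0 < m := hm.pos
  have key : tauChar m (chiJacobi m) q
      = (jacobiSym a m : ℂ) * tauChar m (chiJacobi m) ((a : ℤ) * q) := by
    unfold tauChar
    rw [Finset.mul_sum]
    rw [sum_range_mul_shift hm0 ha
      (f := fun v => chiJacobi m v * Complex.exp (2 * Real.pi * Complex.I * v * q / m)) ?_]
    · refine Finset.sum_congr rfl fun v hv => ?_
      have hchi : chiJacobi m (a * v) = (jacobiSym a m : ℂ) * chiJacobi m v := by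
        unfold chiJacobi
        rw [show ((a * v : ℕ) : ℤ) = (a : ℤ) * (v : ℤ) by push_cast; ring, jacobiSym.mul_left]
        push_cast
        ring
      rw [hchi]
      have hexp : Complex.exp (2 * Real.pi * Complex.I * ((a * v : ℕ) : ℂ) * q / m)
          = Complex.exp (2 * Real.pi * Complex.I * (v : ℂ) * (((a : ℤ) * q : ℤ) : ℂ) / m) := by
        congr 1
        push_cast
        ring
      rw [hexp]
      ring
    · intro j
      have h1 : chiJacobi m (j % m) = chiJacobi m j := by
        unfold chiJacobi
        congr 1
        rw [jacobiSym.mod_left (j : ℤ) m]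
        rw [jacobiSym.mod_left (((j % m : ℕ) : ℤ)) m]
        congr 1
        push_cast
        rw [Int.emod_emod_of_dvd _ dvd_rfl]
      rw [h1, e_mod hm0]
  have hsq : ((jacobiSym a m : ℂ)) * (jacobiSym a m : ℂ) = 1 := by
    have : jacobiSym (a : ℤ) m ^ 2 = 1 := jacobiSym.sq_one (by
      rwa [Int.gcd_natCast_natCast])
    have := congrArg (fun z : ℤ => (z : ℂ)) this
    push_cast at this
    rw [pow_two] at this
    exact this
  calc tauChar m (chiJacobi m) ((a : ℤ) * q)
      = ((jacobiSym a m : ℂ) * (jacobiSym a m : ℂ)) * tauChar m (chiJacobi m) ((a : ℤ) * q) := by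
        rw [hsq, one_mul]
    _ = (jacobiSym a m : ℂ) * tauChar m (chiJacobi m) q := by rw [mul_assoc, ← key]

lemma exp_pi_div_two_mul_I' : Complex.exp ((Real.pi / 2 : ℝ) * Complex.I) = Complex.I := by
  rw [Complex.exp_mul_I]
  rw [show ((Real.pi / 2 : ℝ) : ℂ) = ((Real.pi / 2 : ℝ) : ℂ) from rfl]
  rw [← Complex.ofReal_cos, ← Complex.ofReal_sin, Real.cos_pi_div_two, Real.sin_pi_div_two]
  simp

lemma exp_q_quarter (q : ℕ) : Complex.exp (2 * Real.pi * Complex.I * 1 * q / 4) = Complex.I ^ q := by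
  rw [show (2 * (Real.pi:ℂ) * Complex.I * 1 * q / 4) = (q : ℂ) * (((Real.pi / 2 : ℝ) : ℂ) * Complex.I) by
    push_cast; ring]
  rw [Complex.exp_nat_mul, exp_pi_div_two_mul_I']

lemma exp_three_q_quarter (q : ℕ) :
    Complex.exp (2 * Real.pi * Complex.I * 3 * q / 4) = (-Complex.I) ^ q := by
  rw [show (2 * (Real.pi:ℂ) * Complex.I * 3 * q / 4)
      = (q : ℂ) * (((Real.pi : ℝ) : ℂ) * Complex.I + ((Real.pi / 2 : ℝ) : ℂ) * Complex.I) by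
    push_cast; ring]
  rw [Complex.exp_nat_mul, Complex.exp_add, exp_pi_div_two_mul_I', Complex.exp_pi_mul_I]
  norm_num

lemma jacobi_four {m : ℕ} (hm : Odd m) : jacobiSym 4 m = 1 := by
  rw [show (4 : ℤ) = 2 ^ 2 by norm_num]
  exact jacobiSym.sq_one' (by
    have : Nat.Coprime 2 m := Nat.coprime_two_left.mpr hm
    simpa [Int.gcd] using this)

lemma jacobi_u1 {m : ℕ} (hm : Odd m) (v : ℕ) :
    (jacobiSym (m : ℤ) (m + 4 * v) : ℤ) = (if m % 4 = 3 then -1 else 1) * jacobiSym (v : ℤ) m := by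
  have hmv : Odd (m + 4 * v) := by
    rcases hm with ⟨k, hk⟩; exact ⟨k + 2 * v, by omega⟩
  have hb : ((m : ℤ) + 4 * v) % m = (4 * v : ℤ) % m := by
    rw [show ((m : ℤ) + 4 * v) = 4 * v + m * 1 by ring, Int.add_mul_emod_self_left]
  have hred : jacobiSym ((m + 4 * v : ℕ) : ℤ) m = jacobiSym (v : ℤ) m := by
    rw [show ((m + 4 * v : ℕ) : ℤ) = (m : ℤ) + 4 * v by push_cast; ring]
    rw [jacobiSym.mod_left' hb]
    rw [show (4 * (v : ℤ)) = 4 * v by ring, jacobiSym.mul_left, jacobi_four hm, one_mul]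
  have hm4 : m % 4 = 1 ∨ m % 4 = 3 := by
    rcases hm with ⟨k, hk⟩; omega
  rcases hm4 with h1 | h3
  · rw [if_neg (by omega)]
    rw [jacobiSym.quadratic_reciprocity_one_mod_four h1 hmv, hred, one_mul]
  · rw [if_pos h3]
    have hb4 : (m + 4 * v) % 4 = 3 := by omega
    rw [jacobiSym.quadratic_reciprocity_three_mod_four h3 hb4, hred]
    ring

lemma jacobi_u3 {m : ℕ} (hm : Odd m) (v : ℕ) :
    (jacobiSym (m : ℤ) (m * 3 + 4 * v) : ℤ) = jacobiSym (v : ℤ) m := by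
  have hmv : Odd (m * 3 + 4 * v) := by
    rcases hm with ⟨k, hk⟩; exact ⟨3 * k + 2 * v + 1, by omega⟩
  have hb : ((m : ℤ) * 3 + 4 * v) % m = (4 * v : ℤ) % m := by
    rw [show ((m : ℤ) * 3 + 4 * v) = 4 * v + m * 3 by ring, Int.add_mul_emod_self_left]
  have hred : jacobiSym ((m * 3 + 4 * v : ℕ) : ℤ) m = jacobiSym (v : ℤ) m := by
    rw [show ((m * 3 + 4 * v : ℕ) : ℤ) = (m : ℤ) * 3 + 4 * v by push_cast; ring]
    rw [jacobiSym.mod_left' hb]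
    rw [jacobiSym.mul_left, jacobi_four hm, one_mul]
  have hm4 : m % 4 = 1 ∨ m % 4 = 3 := by
    rcases hm with ⟨k, hk⟩; omega
  rcases hm4 with h1 | h3
  · rw [jacobiSym.quadratic_reciprocity_one_mod_four h1 hmv, hred]
  · have hb4 : (m * 3 + 4 * v) % 4 = 1 := by omega
    rw [jacobiSym.quadratic_reciprocity_one_mod_four' hm hb4, hred]
lemma chi4m_even {m j : ℕ} (hj : ¬ Odd j) : chi4m m j = 0 := by simp [chi4m, hj]

lemma e_modn {n : ℕ} (hn : 0 < n) (q j : ℕ) :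
    Complex.exp (2 * Real.pi * Complex.I * ((j % n : ℕ) : ℂ) * (q : ℂ) / n)
      = Complex.exp (2 * Real.pi * Complex.I * (j : ℂ) * (q : ℂ) / n) := by
  have := e_mod hn (q : ℤ) j
  push_cast at this
  exact this

lemma tau4_eq {m : ℕ} (hm : Odd m) (q : ℕ) :
    tauChar (4 * m) (chi4m m) (q : ℤ) =
      ((if m % 4 = 3 then (-1 : ℂ) else 1) * Complex.I ^ q + (-Complex.I) ^ q)
        * tauChar m (chiJacobi m) (q : ℤ) := by
  have hm0 : 0 < m := hm.pos
  have h4m0 : 0 < 4 * m := by positivity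
  unfold tauChar
  simp only [Int.cast_natCast]
  rw [sum_range_four_mul hm _ ?hper]
  case hper =>
    intro j
    by_cases hj : Odd j
    · have hj' : Odd (j % (4 * m)) := by
        have h2 : 2 ∣ 4 * m := ⟨2 * m, by ring⟩
        have := Nat.mod_mod_of_dvd j h2
        rcases hj with ⟨k, hk⟩
        refine Nat.odd_iff.mpr ?_
        rw [this]
        omega
      rw [show chi4m m (j % (4 * m)) = chi4m m j by
        unfold chi4m
        rw [if_pos hj', if_pos hj]
        exact_mod_cast congrArg (fun z : ℤ => (z : ℂ)) (jacobiSym.mod_right' m hj).symm]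
      rw [e_modn h4m0]
    · have hj' : ¬ Odd (j % (4 * m)) := by
        have h2 : 2 ∣ 4 * m := ⟨2 * m, by ring⟩
        have := Nat.mod_mod_of_dvd j h2
        rw [Nat.odd_iff] at hj ⊢
        omega
      rw [chi4m_even hj, chi4m_even hj', zero_mul, zero_mul]
  -- expand sum over u ∈ range 4
  rw [show (4 : ℕ) = 3 + 1 by rfl, Finset.sum_range_succ, Finset.sum_range_succ,
    Finset.sum_range_succ, Finset.sum_range_one]
  have hzero : ∀ u v : ℕ, ¬ Odd (m * u + 4 * v) → chi4m m (m * u + 4 * v)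
      * Complex.exp (2 * Real.pi * Complex.I * ((m * u + 4 * v : ℕ) : ℂ) * (q : ℂ) / ((4 * m : ℕ) : ℂ)) = 0 := by
    intro u v h
    rw [chi4m_even h, zero_mul]
  have h0 : ∑ v ∈ Finset.range m, chi4m m (m * 0 + 4 * v)
      * Complex.exp (2 * Real.pi * Complex.I * ((m * 0 + 4 * v : ℕ) : ℂ) * (q : ℂ) / ((4 * m : ℕ) : ℂ)) = 0 := by
    refine Finset.sum_eq_zero fun v hv => hzero 0 v (by rw [Nat.odd_iff]; omega)
  have h2 : ∑ v ∈ Finset.range m, chi4m m (m * 2 + 4 * v)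
      * Complex.exp (2 * Real.pi * Complex.I * ((m * 2 + 4 * v : ℕ) : ℂ) * (q : ℂ) / ((4 * m : ℕ) : ℂ)) = 0 := by
    refine Finset.sum_eq_zero fun v hv => hzero 2 v (by rw [Nat.odd_iff]; omega)
  have hodd1 : ∀ v : ℕ, Odd (m * 1 + 4 * v) := by
    intro v; rcases hm with ⟨k, hk⟩; exact ⟨k + 2 * v, by omega⟩
  have hodd3 : ∀ v : ℕ, Odd (m * 3 + 4 * v) := by
    intro v; rcases hm with ⟨k, hk⟩; exact ⟨3 * k + 2 * v + 1, by omega⟩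
  have hJ1 : ∀ v : ℕ, (jacobiSym (m : ℤ) (m * 1 + 4 * v) : ℂ)
      = (if m % 4 = 3 then (-1 : ℂ) else 1) * (jacobiSym (v : ℤ) m : ℂ) := by
    intro v
    have h := jacobi_u1 hm v
    rw [show m + 4 * v = m * 1 + 4 * v by ring] at h
    by_cases h3 : m % 4 = 3 <;> simp only [h3, reduceIte, if_true, if_false] at h ⊢ <;>
      exact_mod_cast congrArg (fun z : ℤ => (z : ℂ)) h
  have hJ3 : ∀ v : ℕ, (jacobiSym (m : ℤ) (m * 3 + 4 * v) : ℂ) = (jacobiSym (v : ℤ) m : ℂ) :=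
    fun v => congrArg (fun z : ℤ => (z : ℂ)) (jacobi_u3 hm v)
  have hsplit : ∀ u v : ℕ,
      Complex.exp (2 * Real.pi * Complex.I * ((m * u + 4 * v : ℕ) : ℂ) * (q : ℂ) / ((4 * m : ℕ) : ℂ))
        = Complex.exp (2 * Real.pi * Complex.I * (u : ℂ) * (q : ℂ) / 4)
          * Complex.exp (2 * Real.pi * Complex.I * (v : ℂ) * (q : ℂ) / (m : ℂ)) := by
    intro u v
    rw [← Complex.exp_add]
    congr 1
    have hm' : ((m : ℂ)) ≠ 0 := by exact_mod_cast hm0.ne'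
    push_cast
    field_simp
  have h1 : ∑ v ∈ Finset.range m, chi4m m (m * 1 + 4 * v)
      * Complex.exp (2 * Real.pi * Complex.I * ((m * 1 + 4 * v : ℕ) : ℂ) * (q : ℂ) / ((4 * m : ℕ) : ℂ))
      = (if m % 4 = 3 then (-1 : ℂ) else 1) * Complex.I ^ q
        * ∑ v ∈ Finset.range m, chiJacobi m v
            * Complex.exp (2 * Real.pi * Complex.I * (v : ℂ) * (q : ℂ) / (m : ℂ)) := by
    rw [Finset.mul_sum]
    refine Finset.sum_congr rfl fun v hv => ?_
    rw [hsplit 1 v]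
    rw [show chi4m m (m * 1 + 4 * v) = (jacobiSym (m : ℤ) (m * 1 + 4 * v) : ℂ) by
      unfold chi4m; rw [if_pos (hodd1 v)]]
    rw [hJ1 v]
    rw [show Complex.exp (2 * Real.pi * Complex.I * ((1 : ℕ) : ℂ) * (q : ℂ) / 4) = Complex.I ^ q by
      rw [show ((1 : ℕ) : ℂ) = 1 by norm_num]; exact exp_q_quarter q]
    unfold chiJacobi
    ring
  have h3 : ∑ v ∈ Finset.range m, chi4m m (m * 3 + 4 * v)
      * Complex.exp (2 * Real.pi * Complex.I * ((m * 3 + 4 * v : ℕ) : ℂ) * (q : ℂ) / ((4 * m : ℕ) : ℂ))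
      = (-Complex.I) ^ q
        * ∑ v ∈ Finset.range m, chiJacobi m v
            * Complex.exp (2 * Real.pi * Complex.I * (v : ℂ) * (q : ℂ) / (m : ℂ)) := by
    rw [Finset.mul_sum]
    refine Finset.sum_congr rfl fun v hv => ?_
    rw [hsplit 3 v]
    rw [show chi4m m (m * 3 + 4 * v) = (jacobiSym (m : ℤ) (m * 3 + 4 * v) : ℂ) by
      unfold chi4m; rw [if_pos (hodd3 v)]]
    rw [hJ3 v]
    rw [show Complex.exp (2 * Real.pi * Complex.I * ((3 : ℕ) : ℂ) * (q : ℂ) / 4) = (-Complex.I) ^ q by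
      rw [show ((3 : ℕ) : ℂ) = 3 by norm_num]; exact exp_three_q_quarter q]
    unfold chiJacobi
    ring
  rw [h0, h1, h2, h3]
  ring

lemma jacobi_neg_one_c {m : ℕ} (hm : Odd m) :
    (jacobiSym (-1) m : ℂ) = (if m % 4 = 3 then (-1 : ℂ) else 1) := by
  rw [jacobiSym.at_neg_one hm]
  have hm4 : m % 4 = 1 ∨ m % 4 = 3 := by rcases hm with ⟨k, hk⟩; omega
  rcases hm4 with h | h
  · rw [ZMod.χ₄_nat_one_mod_four h, if_neg (by omega)]; norm_num
  · rw [ZMod.χ₄_nat_three_mod_four h, if_pos h]; norm_num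

lemma GJacobi_eq {m : ℕ} (hm : Odd m) (q : ℤ) :
    GJacobi m q = (if m % 4 = 3 then -Complex.I else 1) * tauChar m (chiJacobi m) q := by
  unfold GJacobi
  rw [jacobi_neg_one_c hm]
  by_cases h : m % 4 = 3 <;> simp only [h, reduceIte, if_true, if_false] <;> ring_nf

lemma I_pow_emod (q : ℕ) : Complex.I ^ q = Complex.I ^ (q % 4) := by
  conv_lhs => rw [← Nat.div_add_mod q 4]
  rw [pow_add, pow_mul, Complex.I_pow_four, one_pow, one_mul]

lemma jacobi_two_coprime {m : ℕ} (hm : Odd m) : Nat.Coprime 2 m := Nat.coprime_two_left.mpr hm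

lemma tau4_four {m : ℕ} (hm : Odd m) (q : ℕ) :
    tauChar (4 * m) (chi4m m) ((4 * q : ℕ) : ℤ) =
      ((jacobiSym 1 m : ℂ) + (jacobiSym (-1) m : ℂ)) * GJacobi m (q : ℤ) := by
  rw [tau4_eq hm (4 * q)]
  have hI : Complex.I ^ (4 * q) = 1 := by rw [pow_mul, Complex.I_pow_four, one_pow]
  have hI' : (-Complex.I) ^ (4 * q) = 1 := by
    rw [pow_mul, show (-Complex.I) ^ 4 = 1 by rw [neg_pow, Complex.I_pow_four]; norm_num, one_pow]
  have hshift : tauChar m (chiJacobi m) ((4 * q : ℕ) : ℤ)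
      = (jacobiSym (4 : ℕ) m : ℂ) * tauChar m (chiJacobi m) (q : ℤ) := by
    rw [show ((4 * q : ℕ) : ℤ) = ((4 : ℕ) : ℤ) * (q : ℤ) by push_cast; ring]
    exact tauChar_mul_shift hm (coprime_four hm) (q : ℤ)
  rw [hI, hI', hshift, GJacobi_eq hm, jacobiSym.one_left,
    show (jacobiSym ((4 : ℕ) : ℤ) m : ℂ) = 1 by rw [show ((4:ℕ):ℤ) = 4 by norm_num, jacobi_four hm]; norm_num,
    jacobi_neg_one_c hm]
  by_cases h : m % 4 = 3 <;> simp only [h, reduceIte, if_true, if_false] <;> ring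

lemma tau4_two {m : ℕ} (hm : Odd m) {q : ℕ} (hq : Odd q) :
    tauChar (4 * m) (chi4m m) ((2 * q : ℕ) : ℤ) =
      -((jacobiSym 2 m : ℂ) + (jacobiSym (-2) m : ℂ)) * GJacobi m (q : ℤ) := by
  rw [tau4_eq hm (2 * q)]
  have hI : Complex.I ^ (2 * q) = -1 := by
    rw [pow_mul, Complex.I_sq, Odd.neg_one_pow hq]
  have hI' : (-Complex.I) ^ (2 * q) = -1 := by
    rw [pow_mul, show (-Complex.I) ^ 2 = -1 by rw [neg_pow, Complex.I_sq]; norm_num,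
      Odd.neg_one_pow hq]
  have hshift : tauChar m (chiJacobi m) ((2 * q : ℕ) : ℤ)
      = (jacobiSym (2 : ℕ) m : ℂ) * tauChar m (chiJacobi m) (q : ℤ) := by
    rw [show ((2 * q : ℕ) : ℤ) = ((2 : ℕ) : ℤ) * (q : ℤ) by push_cast; ring]
    exact tauChar_mul_shift hm (jacobi_two_coprime hm) (q : ℤ)
  have hneg2 : (jacobiSym (-2) m : ℂ) = (jacobiSym (-1) m : ℂ) * (jacobiSym 2 m : ℂ) := by
    rw [show (-2 : ℤ) = (-1) * 2 by norm_num, jacobiSym.mul_left]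
    push_cast
    ring
  rw [hI, hI', hshift, GJacobi_eq hm, hneg2, jacobi_neg_one_c hm]
  rw [show (jacobiSym ((2 : ℕ) : ℤ) m : ℂ) = (jacobiSym 2 m : ℂ) by norm_num]
  by_cases h : m % 4 = 3 <;> simp only [h, reduceIte, if_true, if_false] <;> ring

lemma tau4_odd {m : ℕ} (hm : Odd m) {q : ℕ} (hq : Odd q) :
    tauChar (4 * m) (chi4m m) (q : ℤ) =
      ((jacobiSym 1 m : ℂ) - (jacobiSym (-1) m : ℂ)) * (jacobiSym (-1) q : ℂ)
        * GJacobi m (q : ℤ) := by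
  rw [tau4_eq hm q]
  have hq4 : q % 4 = 1 ∨ q % 4 = 3 := by rcases hq with ⟨k, hk⟩; omega
  have hIneg : (-Complex.I) ^ q = -(Complex.I ^ q) := Odd.neg_pow hq _
  rw [hIneg, GJacobi_eq hm, jacobiSym.one_left, jacobi_neg_one_c hm, jacobi_neg_one_c hq]
  have hm4 : m % 4 = 1 ∨ m % 4 = 3 := by rcases hm with ⟨k, hk⟩; omega
  rcases hm4 with h | h
  · rw [if_neg (by omega)]
    simp only [h, reduceIte]
    norm_num
  · rw [if_pos h]
    simp only [h, reduceIte]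
    rcases hq4 with hq1 | hq3
    · rw [if_neg (by omega), I_pow_emod, hq1, pow_one]
      ring
    · rw [if_pos hq3, I_pow_emod, hq3]
      rw [show Complex.I ^ 3 = -Complex.I by
        rw [pow_succ, Complex.I_sq]; ring]
      ring

noncomputable def Fterm (s w : ℂ) (qm : ℕ+ × ℕ+) : ℂ :=
  if Odd (qm.2 : ℕ) then
    tauChar (4 * qm.2) (chi4m qm.2) qm.1 / (((qm.1 : ℕ) : ℂ) ^ s * ((qm.2 : ℕ) : ℂ) ^ w)
  else 0

lemma cpow_two_mul (q : ℕ+) (s : ℂ) :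
    ((((2 * q : ℕ+) : ℕ)) : ℂ) ^ s = (2 : ℂ) ^ s * (((q : ℕ)) : ℂ) ^ s := by
  have h : ((((2 * q : ℕ+) : ℕ)) : ℂ) = (((2 : ℝ)) : ℂ) * ((((q : ℕ) : ℝ)) : ℂ) := by
    push_cast; ring
  rw [h, mul_cpow_ofReal_nonneg (by norm_num) (by positivity)]
  norm_num

lemma cpow_four_mul (q : ℕ+) (s : ℂ) :
    ((((4 * q : ℕ+) : ℕ)) : ℂ) ^ s = (4 : ℂ) ^ s * (((q : ℕ)) : ℂ) ^ s := by
  have h : ((((4 * q : ℕ+) : ℕ)) : ℂ) = (((4 : ℝ)) : ℂ) * ((((q : ℕ) : ℝ)) : ℂ) := by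
    push_cast; ring
  rw [h, mul_cpow_ofReal_nonneg (by norm_num) (by positivity)]
  norm_num

lemma psiJ_odd (j : ℤ) {k : ℕ} (hk : Odd k) : psiJ j k = (jacobiSym j k : ℂ) := by
  unfold psiJ; rw [if_pos hk]

lemma psiJ_even (j : ℤ) {k : ℕ} (hk : ¬ Odd k) : psiJ j k = 0 := by
  unfold psiJ; rw [if_neg hk]

lemma C1term_left_even (s w : ℂ) (j : ℤ) (ψ' : ℕ → ℂ) {p : ℕ+ × ℕ+} (h : ¬ Odd (p.1 : ℕ)) :
    C1term s w (psiJ j) ψ' p = 0 := by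
  unfold C1term
  rw [psiJ_even j h, mul_zero, zero_mul, zero_div]

lemma C1term_right_even (s w : ℂ) (ψ : ℕ → ℂ) (j : ℤ) {p : ℕ+ × ℕ+} (h : ¬ Odd (p.2 : ℕ)) :
    C1term s w ψ (psiJ j) p = 0 := by
  unfold C1term
  rw [psiJ_even j h, mul_zero, zero_div]

lemma Fterm_odd_eq (s w : ℂ) (p : ℕ+ × ℕ+) (hq : Odd (p.1 : ℕ)) :
    Fterm s w p = C1term s w (psiJ 1) (psiJ (-1)) (p.2, p.1)
      - C1term s w (psiJ (-1)) (psiJ (-1)) (p.2, p.1) := by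
  by_cases hm : Odd (p.2 : ℕ)
  · rw [Fterm, if_pos hm]
    have ht := tau4_odd hm hq
    unfold C1term
    simp only
    rw [psiJ_odd 1 hm, psiJ_odd (-1) hm, psiJ_odd (-1) hq]
    rw [show ((p.1 : ℕ+) : ℤ) = (((p.1 : ℕ+) : ℕ) : ℤ) by norm_cast] at *
    rw [ht]
    ring
  · rw [Fterm, if_neg hm,
      C1term_left_even s w 1 _ (p := (p.2, p.1)) hm,
      C1term_left_even s w (-1) _ (p := (p.2, p.1)) hm]
    ring

lemma Fterm_two_eq (s w : ℂ) (p : ℕ+ × ℕ+) (hq : Odd (p.1 : ℕ)) :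
    Fterm s w (2 * p.1, p.2) = -(2 : ℂ) ^ (-s) *
      (C1term s w (psiJ 2) (psiJ 1) (p.2, p.1) + C1term s w (psiJ (-2)) (psiJ 1) (p.2, p.1)) := by
  by_cases hm : Odd (p.2 : ℕ)
  · rw [Fterm]
    simp only
    rw [if_pos hm]
    unfold C1term
    simp only
    rw [psiJ_odd 2 hm, psiJ_odd (-2) hm, psiJ_odd 1 hq, jacobiSym.one_left]
    rw [show ((((2 * p.1 : ℕ+)) : ℤ)) = (((2 * (p.1 : ℕ) : ℕ)) : ℤ) by push_cast; ring]
    rw [show ((p.1 : ℕ+) : ℤ) = (((p.1 : ℕ+) : ℕ) : ℤ) by norm_cast] at *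
    rw [tau4_two hm hq]
    rw [cpow_two_mul p.1 s, Complex.cpow_neg]
    push_cast
    ring
  · rw [Fterm]
    simp only
    rw [if_neg hm,
      C1term_left_even s w 2 _ (p := (p.2, p.1)) hm,
      C1term_left_even s w (-2) _ (p := (p.2, p.1)) hm]
    ring

lemma Fterm_four_eq (s w : ℂ) (p : ℕ+ × ℕ+) :
    Fterm s w (4 * p.1, p.2) = (4 : ℂ) ^ (-s) *
      (C1term s w (psiJ 1) psi0 (p.2, p.1) + C1term s w (psiJ (-1)) psi0 (p.2, p.1)) := by
  by_cases hm : Odd (p.2 : ℕ)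
  · rw [Fterm]
    simp only
    rw [if_pos hm]
    unfold C1term psi0
    simp only
    rw [psiJ_odd 1 hm, psiJ_odd (-1) hm]
    rw [show ((((4 * p.1 : ℕ+)) : ℤ)) = (((4 * (p.1 : ℕ) : ℕ)) : ℤ) by push_cast; ring]
    rw [show ((p.1 : ℕ+) : ℤ) = (((p.1 : ℕ+) : ℕ) : ℤ) by norm_cast] at *
    rw [tau4_four hm (p.1 : ℕ)]
    rw [cpow_four_mul p.1 s, Complex.cpow_neg]
    push_cast
    ring
  · rw [Fterm]
    simp only
    rw [if_neg hm,
      C1term_left_even s w 1 _ (p := (p.2, p.1)) hm,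
      C1term_left_even s w (-1) _ (p := (p.2, p.1)) hm]
    ring

lemma Fterm_norm_le (s w : ℂ) (p : ℕ+ × ℕ+) :
    ‖Fterm s w p‖ ≤ 4 * ((p.1 : ℝ) ^ (-s.re) * (p.2 : ℝ) ^ (-(w.re - 1))) := by
  obtain ⟨q, m⟩ := p
  have hq : (0:ℝ) < (q:ℝ) := by exact_mod_cast q.pos
  have hm : (0:ℝ) < (m:ℝ) := by exact_mod_cast m.pos
  by_cases hodd : Odd (m : ℕ)
  · rw [Fterm, if_pos hodd]
    have hnum : ‖tauChar (4 * (m:ℕ)) (chi4m (m:ℕ)) ((q : ℕ+) : ℤ)‖ ≤ 4 * m :=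
      le_trans (tau_norm_le _ _ (chi4m_norm_le (m:ℕ)) _) (by push_cast; linarith)
    have hden : ‖(((q : ℕ) : ℂ)) ^ s * (((m : ℕ) : ℂ)) ^ w‖ = (q : ℝ) ^ s.re * (m : ℝ) ^ w.re := by
      rw [norm_mul, norm_pnat_cpow, norm_pnat_cpow]
    rw [norm_div, hden]
    have hdpos : (0:ℝ) < (q : ℝ) ^ s.re * (m : ℝ) ^ w.re := by positivity
    calc ‖tauChar (4 * (m:ℕ)) (chi4m (m:ℕ)) ((q : ℕ+) : ℤ)‖ / ((q : ℝ) ^ s.re * (m : ℝ) ^ w.re)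
        ≤ (4 * m) / ((q : ℝ) ^ s.re * (m : ℝ) ^ w.re) := by gcongr
      _ = 4 * ((q : ℝ) ^ (-s.re) * (m : ℝ) ^ (-(w.re - 1))) := by
          rw [show -(w.re - 1) = 1 + -w.re by ring, Real.rpow_add hm, Real.rpow_one,
            Real.rpow_neg hm.le, Real.rpow_neg hq.le]
          field_simp
  · rw [Fterm, if_neg hodd, norm_zero]
    positivity

theorem C1_decomposition (s w : ℂ) (hs : 2 < s.re) (hw : 2 < w.re) :
    Summable (fun qm : ℕ+ × ℕ+ =>
      ‖if Odd (qm.2 : ℕ) then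
          tauChar (4 * qm.2) (chi4m qm.2) qm.1 / (((qm.1 : ℕ) : ℂ) ^ s * ((qm.2 : ℕ) : ℂ) ^ w)
        else 0‖) ∧
    Summable (fun lq => ‖C1term s w (psiJ 2) (psiJ 1) lq‖) ∧
    Summable (fun lq => ‖C1term s w (psiJ (-2)) (psiJ 1) lq‖) ∧
    Summable (fun lq => ‖C1term s w (psiJ 1) psi0 lq‖) ∧
    Summable (fun lq => ‖C1term s w (psiJ (-1)) psi0 lq‖) ∧
    Summable (fun lq => ‖C1term s w (psiJ 1) (psiJ (-1)) lq‖) ∧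
    Summable (fun lq => ‖C1term s w (psiJ (-1)) (psiJ (-1)) lq‖) ∧
    (∑' qm : ℕ+ × ℕ+,
        if Odd (qm.2 : ℕ) then
          tauChar (4 * qm.2) (chi4m qm.2) qm.1 / (((qm.1 : ℕ) : ℂ) ^ s * ((qm.2 : ℕ) : ℂ) ^ w)
        else 0) =
      -(2 : ℂ) ^ (-s) * (C1 s w (psiJ 2) (psiJ 1) + C1 s w (psiJ (-2)) (psiJ 1)) +
        (4 : ℂ) ^ (-s) * (C1 s w (psiJ 1) psi0 + C1 s w (psiJ (-1)) psi0) +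
        C1 s w (psiJ 1) (psiJ (-1)) - C1 s w (psiJ (-1)) (psiJ (-1)) := by
  have hs1 : 1 < s.re := by linarith
  have hw1 : 1 < w.re - 1 := by linarith
  have hFnorm : Summable (fun p : ℕ+ × ℕ+ => ‖Fterm s w p‖) :=
    summable_of_bound hs1 hw1 (fun p => Fterm_norm_le s w p)
  have hC : ∀ (ψ ψ' : ℕ → ℂ), (∀ j, ‖ψ j‖ ≤ 1) → (∀ j, ‖ψ' j‖ ≤ 1) →
      Summable (fun lq => ‖C1term s w ψ ψ' lq‖) := fun ψ ψ' h h' =>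
    summable_of_bound hw1 hs1 (fun p => C1term_norm_le s w ψ ψ' h h' p)
  have hC2 := hC (psiJ 2) (psiJ 1) (psiJ_norm_le 2) (psiJ_norm_le 1)
  have hCm2 := hC (psiJ (-2)) (psiJ 1) (psiJ_norm_le (-2)) (psiJ_norm_le 1)
  have hC1p := hC (psiJ 1) psi0 (psiJ_norm_le 1) psi0_norm_le
  have hCm1p := hC (psiJ (-1)) psi0 (psiJ_norm_le (-1)) psi0_norm_le
  have hC1m := hC (psiJ 1) (psiJ (-1)) (psiJ_norm_le 1) (psiJ_norm_le (-1))
  have hCm1m := hC (psiJ (-1)) (psiJ (-1)) (psiJ_norm_le (-1)) (psiJ_norm_le (-1))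
  refine ⟨hFnorm, hC2, hCm2, hC1p, hCm1p, hC1m, hCm1m, ?_⟩
  -- Summable C1term functions and their swaps
  have swS : ∀ (ψ ψ' : ℕ → ℂ), Summable (fun lq => ‖C1term s w ψ ψ' lq‖) →
      Summable (fun p : ℕ+ × ℕ+ => C1term s w ψ ψ' (p.2, p.1)) := by
    intro ψ ψ' h
    exact ((Equiv.prodComm ℕ+ ℕ+).summable_iff).mpr h.of_norm
  have swT : ∀ (ψ ψ' : ℕ → ℂ),
      ∑' p : ℕ+ × ℕ+, C1term s w ψ ψ' (p.2, p.1) = C1 s w ψ ψ' := by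
    intro ψ ψ'
    exact (Equiv.prodComm ℕ+ ℕ+).tsum_eq (C1term s w ψ ψ')
  -- the three pieces
  set F1 : ℕ+ × ℕ+ → ℂ := fun p => if Odd (p.1 : ℕ) then Fterm s w p else 0 with hF1
  set F2 : ℕ+ × ℕ+ → ℂ := fun p => if (p.1 : ℕ) % 4 = 2 then Fterm s w p else 0 with hF2
  set F4 : ℕ+ × ℕ+ → ℂ := fun p => if (p.1 : ℕ) % 4 = 0 then Fterm s w p else 0 with hF4
  have hb : ∀ (G : ℕ+ × ℕ+ → ℂ), (∀ p, G p = Fterm s w p ∨ G p = 0) → Summable G := by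
    intro G hG
    refine Summable.of_norm (Summable.of_norm_bounded hFnorm fun p => ?_)
    rcases hG p with h | h <;> rw [h] <;> simp
  have hs1' : Summable F1 := hb F1 (by intro p; rw [hF1]; dsimp only; split; exacts [Or.inl rfl, Or.inr rfl])
  have hs2' : Summable F2 := hb F2 (by intro p; rw [hF2]; dsimp only; split; exacts [Or.inl rfl, Or.inr rfl])
  have hs4' : Summable F4 := hb F4 (by intro p; rw [hF4]; dsimp only; split; exacts [Or.inl rfl, Or.inr rfl])
  have hdecomp : ∀ p, Fterm s w p = F1 p + F2 p + F4 p := by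
    intro p
    rw [hF1, hF2, hF4]
    dsimp only
    have h2 : (p.1 : ℕ) % 2 = (p.1 : ℕ) % 4 % 2 := (Nat.mod_mod_of_dvd _ ⟨2, rfl⟩).symm
    rcases (by omega : (p.1:ℕ) % 4 = 0 ∨ (p.1:ℕ) % 4 = 1 ∨ (p.1:ℕ) % 4 = 2 ∨ (p.1:ℕ) % 4 = 3)
      with h | h | h | h
    · rw [if_neg (by rw [Nat.odd_iff]; omega), if_neg (by omega), if_pos h]; ring
    · rw [if_pos (by rw [Nat.odd_iff]; omega), if_neg (by omega), if_neg (by omega)]; ring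
    · rw [if_neg (by rw [Nat.odd_iff]; omega), if_pos h, if_neg (by omega)]; ring
    · rw [if_pos (by rw [Nat.odd_iff]; omega), if_neg (by omega), if_neg (by omega)]; ring
  -- Block 1 : odd part
  have hB1 : ∑' p, F1 p = C1 s w (psiJ 1) (psiJ (-1)) - C1 s w (psiJ (-1)) (psiJ (-1)) := by
    have e1 : ∀ p : ℕ+ × ℕ+, F1 p = C1term s w (psiJ 1) (psiJ (-1)) (p.2, p.1)
        - C1term s w (psiJ (-1)) (psiJ (-1)) (p.2, p.1) := by
      intro p
      rw [hF1]
      dsimp only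
      by_cases hq : Odd (p.1 : ℕ)
      · rw [if_pos hq]; exact Fterm_odd_eq s w p hq
      · rw [if_neg hq, C1term_right_even s w _ (-1) (p := (p.2, p.1)) hq,
          C1term_right_even s w _ (-1) (p := (p.2, p.1)) hq]
        ring
    rw [tsum_congr e1, Summable.tsum_sub (swS _ _ hC1m) (swS _ _ hCm1m), swT, swT]
  -- Block 2 : q ≡ 2 mod 4
  have hB2 : ∑' p, F2 p
      = -(2:ℂ) ^ (-s) * (C1 s w (psiJ 2) (psiJ 1) + C1 s w (psiJ (-2)) (psiJ 1)) := by
    have hinj2 : Function.Injective (fun p : ℕ+ × ℕ+ => ((2 * p.1, p.2) : ℕ+ × ℕ+)) := by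
      intro a b h
      rw [Prod.ext_iff] at h ⊢
      exact ⟨mul_left_cancel h.1, h.2⟩
    have hsupp2 : Function.support F2 ⊆ Set.range (fun p : ℕ+ × ℕ+ => ((2 * p.1, p.2) : ℕ+ × ℕ+)) := by
      intro p hp
      have h2 : (p.1 : ℕ) % 4 = 2 := by
        by_contra h
        apply hp
        rw [hF2]; dsimp only; rw [if_neg h]
      refine ⟨(⟨(p.1 : ℕ) / 2, by omega⟩, p.2), ?_⟩
      dsimp only
      rw [Prod.ext_iff]
      refine ⟨PNat.coe_injective ?_, rfl⟩
      show 2 * ((p.1 : ℕ) / 2) = (p.1 : ℕ)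
      omega
    have key2 : ∑' p, F2 p = ∑' p : ℕ+ × ℕ+, F2 (2 * p.1, p.2) := (hinj2.tsum_eq hsupp2).symm
    have e2 : ∀ p : ℕ+ × ℕ+, F2 (2 * p.1, p.2) = -(2:ℂ) ^ (-s) *
        (C1term s w (psiJ 2) (psiJ 1) (p.2, p.1) + C1term s w (psiJ (-2)) (psiJ 1) (p.2, p.1)) := by
      intro p
      rw [hF2]
      dsimp only
      by_cases hq : Odd (p.1 : ℕ)
      · rw [if_pos (by rw [Nat.odd_iff] at hq; push_cast; omega)]
        exact Fterm_two_eq s w p hq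
      · rw [if_neg (by push_cast; rw [Nat.odd_iff] at hq; omega),
          C1term_right_even s w _ 1 (p := (p.2, p.1)) hq,
          C1term_right_even s w _ 1 (p := (p.2, p.1)) hq]
        ring
    rw [key2, tsum_congr e2, tsum_mul_left, Summable.tsum_add (swS _ _ hC2) (swS _ _ hCm2), swT, swT]
  -- Block 4 : q ≡ 0 mod 4
  have hB4 : ∑' p, F4 p
      = (4:ℂ) ^ (-s) * (C1 s w (psiJ 1) psi0 + C1 s w (psiJ (-1)) psi0) := by
    have hinj4 : Function.Injective (fun p : ℕ+ × ℕ+ => ((4 * p.1, p.2) : ℕ+ × ℕ+)) := by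
      intro a b h
      rw [Prod.ext_iff] at h ⊢
      exact ⟨mul_left_cancel h.1, h.2⟩
    have hsupp4 : Function.support F4 ⊆ Set.range (fun p : ℕ+ × ℕ+ => ((4 * p.1, p.2) : ℕ+ × ℕ+)) := by
      intro p hp
      have h2 : (p.1 : ℕ) % 4 = 0 := by
        by_contra h
        apply hp
        rw [hF4]; dsimp only; rw [if_neg h]
      have hploc : 0 < (p.1 : ℕ) := p.1.pos
      refine ⟨(⟨(p.1 : ℕ) / 4, by omega⟩, p.2), ?_⟩
      dsimp only
      rw [Prod.ext_iff]
      refine ⟨PNat.coe_injective ?_, rfl⟩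
      show 4 * ((p.1 : ℕ) / 4) = (p.1 : ℕ)
      omega
    have key4 : ∑' p, F4 p = ∑' p : ℕ+ × ℕ+, F4 (4 * p.1, p.2) := (hinj4.tsum_eq hsupp4).symm
    have e4 : ∀ p : ℕ+ × ℕ+, F4 (4 * p.1, p.2) = (4:ℂ) ^ (-s) *
        (C1term s w (psiJ 1) psi0 (p.2, p.1) + C1term s w (psiJ (-1)) psi0 (p.2, p.1)) := by
      intro p
      rw [hF4]
      dsimp only
      rw [if_pos (by push_cast; omega)]
      exact Fterm_four_eq s w p
    rw [key4, tsum_congr e4, tsum_mul_left, Summable.tsum_add (swS _ _ hC1p) (swS _ _ hCm1p), swT, swT]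
  have main : ∑' p, Fterm s w p
      = -(2 : ℂ) ^ (-s) * (C1 s w (psiJ 2) (psiJ 1) + C1 s w (psiJ (-2)) (psiJ 1)) +
        (4 : ℂ) ^ (-s) * (C1 s w (psiJ 1) psi0 + C1 s w (psiJ (-1)) psi0) +
        C1 s w (psiJ 1) (psiJ (-1)) - C1 s w (psiJ (-1)) (psiJ (-1)) := by
    calc ∑' p, Fterm s w p = ∑' p, (F1 p + F2 p + F4 p) := tsum_congr hdecomp
      _ = (∑' p, F1 p) + (∑' p, F2 p) + (∑' p, F4 p) := by
          rw [Summable.tsum_add (hs1'.add hs2') hs4', Summable.tsum_add hs1' hs2']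
      _ = _ := by rw [hB1, hB2, hB4]; ring
  exact main
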